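/- Let L ≥ 4 be an even integer and define, for real δ ∈ [0,1], f̂_L(δ) = 1 − h(δ) − (1/L)·log(Σ_{j=L/2}^{L} C(L,j)) + (1/L)·h(Lδ/4) + (δ/4)·log(L(L+2)/4), where C(a,b) is the binomial coefficient. Then f̂_L(0) > 0 and f̂_L(2/L) < 0; consequently there exists δ̂ ∈ (0, 2/L) such that f̂_L(δ̂) = 0 and f̂_L(δ) > 0 for all δ with 0 ≤ δ < δ̂. -/

import Mathlib

open Finset Filter

/-- Weight (number of ones) of a binary word. -/
def wt {n : ℕ} (x : Fin n → Bool) : ℕ := (Finset.univ.filter fun i => x i = true).card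

/-- The index (in a word of length `m * L`) of position `j` of subblock `i`. -/
def subIdx (m L : ℕ) (i : Fin m) (j : Fin L) : Fin (m * L) :=
  ⟨i.val * L + j.val, by
    have hj : j.val < L := j.isLt
    have hi : i.val + 1 ≤ m := i.isLt
    calc i.val * L + j.val < i.val * L + L := Nat.add_lt_add_left hj _
      _ = (i.val + 1) * L := by ring
      _ ≤ m * L := Nat.mul_le_mul hi (Nat.le_refl L)⟩

/-- The `i`-th subblock (of length `L`) of a binary word of length `m * L`. -/
def subblock (m L : ℕ) (x : Fin (m * L) → Bool) (i : Fin m) : Fin L → Bool :=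
  fun j => x (subIdx m L i j)

/-- The CSCC space: binary words of length `m * L` each of whose `m` subblocks of
length `L` has weight exactly `w`. -/
def CSCCspace (m L w : ℕ) : Set (Fin (m * L) → Bool) :=
  {x | ∀ i : Fin m, wt (subblock m L x i) = w}

/-- The SECC space: binary words of length `m * L` each of whose `m` subblocks of
length `L` has weight at least `w`. -/
def SECCspace (m L w : ℕ) : Set (Fin (m * L) → Bool) :=
  {x | ∀ i : Fin m, w ≤ wt (subblock m L x i)}

/-- A code with minimum distance `d` inside the space `Sp`. -/
def isCode {n : ℕ} (Sp : Set (Fin n → Bool)) (d : ℕ) (C : Finset (Fin n → Bool)) : Prop :=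
  (↑C : Set (Fin n → Bool)) ⊆ Sp ∧ ∀ x ∈ C, ∀ y ∈ C, x ≠ y → d ≤ hammingDist x y

/-- The ball of radius `t` around `x`, taken inside the space `Sp`. -/
def ball {n : ℕ} (Sp : Set (Fin n → Bool)) (x : Fin n → Bool) (t : ℕ) :
    Set (Fin n → Bool) :=
  {y | y ∈ Sp ∧ hammingDist x y ≤ t}

/-- `C(m,L,d,w)`: the maximum size of an `(m,L,d,w)`-CSCC. -/
noncomputable def maxCSCC (m L d w : ℕ) : ℕ :=
  sSup {k | ∃ C : Finset (Fin (m * L) → Bool), isCode (CSCCspace m L w) d C ∧ C.card = k}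

/-- `S(m,L,d,w)`: the maximum size of an `(m,L,d,w)`-SECC. -/
noncomputable def maxSECC (m L d w : ℕ) : ℕ :=
  sSup {k | ∃ C : Finset (Fin (m * L) → Bool), isCode (SECCspace m L w) d C ∧ C.card = k}

/-- `A(n,d,w)`: the maximum size of a constant weight code. -/
noncomputable def maxCWC (n d w : ℕ) : ℕ :=
  sSup {k | ∃ C : Finset (Fin n → Bool), isCode {x | wt x = w} d C ∧ C.card = k}

/-- `H(n,d,w)`: the maximum size of a heavy weight code. -/
noncomputable def maxHWC (n d w : ℕ) : ℕ :=
  sSup {k | ∃ C : Finset (Fin n → Bool), isCode {x | w ≤ wt x} d C ∧ C.card = k}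

/-- `A(n,d)`: the maximum size of a binary code of length `n` and distance `d`. -/
noncomputable def maxBinary (n d : ℕ) : ℕ :=
  sSup {k | ∃ C : Finset (Fin n → Bool),
    (∀ x ∈ C, ∀ y ∈ C, x ≠ y → d ≤ hammingDist x y) ∧ C.card = k}

/-- `A_q(n,d)`: the maximum size of a `q`-ary code of length `n` and distance `d`. -/
noncomputable def maxQary (q n d : ℕ) : ℕ :=
  sSup {k | ∃ C : Finset (Fin n → Fin q),
    (∀ x ∈ C, ∀ y ∈ C, x ≠ y → d ≤ hammingDist x y) ∧ C.card = k}

/-- The size of a radius-`r` CSCC ball: the sum over all tuples `(u_1, …, u_m)` with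
`0 ≤ u_i ≤ min{w, L-w}` and `2(u_1 + ⋯ + u_m) ≤ r` of `∏ i, C(w,u_i)·C(L-w,u_i)`. -/
def csccBallSize (m L w r : ℕ) : ℕ :=
  ∑ u ∈ (Finset.univ : Finset (Fin m → Fin (min w (L - w) + 1))).filter
      (fun u => 2 * (∑ i, (u i : ℕ)) ≤ r),
    ∏ i, (w.choose (u i : ℕ)) * ((L - w).choose (u i : ℕ))

/-- The binary entropy function (base-2 logarithms, `h 0 = h 1 = 0`). -/
noncomputable def binent (p : ℝ) : ℝ :=
  -(p * Real.logb 2 p) - (1 - p) * Real.logb 2 (1 - p)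

/-- The asymptotic CSCC rate `γ(L,δ,w/L)`. -/
noncomputable def gammaRate (L : ℕ) (δ : ℝ) (w : ℕ) : ℝ :=
  Filter.limsup (fun m : ℕ =>
    Real.logb 2 (maxCSCC m L ⌊(m : ℝ) * L * δ⌋₊ w) / ((m : ℝ) * L)) Filter.atTop

/-- The asymptotic SECC rate `σ(L,δ,w/L)`. -/
noncomputable def sigmaRate (L : ℕ) (δ : ℝ) (w : ℕ) : ℝ :=
  Filter.limsup (fun m : ℕ =>
    Real.logb 2 (maxSECC m L ⌊(m : ℝ) * L * δ⌋₊ w) / ((m : ℝ) * L)) Filter.atTop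
/-- The function `f̂_L(δ) = 1 − h(δ) − (1/L)·log(Σ_{j=L/2}^{L} C(L,j))
    + (1/L)·h(Lδ/4) + (δ/4)·log(L(L+2)/4)`. -/
noncomputable def fHat (L : ℕ) (δ : ℝ) : ℝ :=
  1 - binent δ
    - (1 / (L : ℝ)) * Real.logb 2 ((∑ j ∈ Finset.Icc (L / 2) L, L.choose j : ℕ))
    + (1 / (L : ℝ)) * binent ((L : ℝ) * δ / 4)
    + (δ / 4) * Real.logb 2 ((L : ℝ) * ((L : ℝ) + 2) / 4)


-- ===== auxiliary lemmas =====

private lemma aux_sum_split (L : ℕ) (hL : 4 ≤ L) :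
    2 ^ L = (∑ j ∈ Finset.Ico 0 (L / 2), L.choose j)
      + ∑ j ∈ Finset.Icc (L / 2) L, L.choose j := by
  rw [← Nat.sum_range_choose L, Finset.range_eq_Ico, ← Finset.Ico_add_one_right_eq_Icc,
    ← Finset.sum_Ico_consecutive _ (Nat.zero_le (L/2)) (by omega : L/2 ≤ L+1)]

private lemma aux_low_le_high (L : ℕ) (hL : 4 ≤ L) (hLe : Even L) :
    (∑ j ∈ Finset.Ico 0 (L / 2), L.choose j)
      ≤ ∑ j ∈ Finset.Icc (L / 2) L, L.choose j := by
  have h2 : L / 2 + L / 2 = L := by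
    obtain ⟨k, hk⟩ := hLe; omega
  have hinj : ∀ x ∈ Finset.Ico 0 (L/2), ∀ y ∈ Finset.Ico 0 (L/2),
      L - x = L - y → x = y := by
    intro x hx y hy h
    simp only [Finset.mem_Ico] at hx hy
    omega
  calc (∑ j ∈ Finset.Ico 0 (L / 2), L.choose j)
      = ∑ j ∈ Finset.Ico 0 (L/2), L.choose (L - j) := by
        apply Finset.sum_congr rfl
        intro j hj
        simp only [Finset.mem_Ico] at hj
        rw [Nat.choose_symm (by omega)]
    _ = ∑ j ∈ (Finset.Ico 0 (L/2)).image (L - ·), L.choose j := by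
        rw [Finset.sum_image hinj]
    _ ≤ ∑ j ∈ Finset.Icc (L / 2) L, L.choose j := by
        apply Finset.sum_le_sum_of_subset
        intro j hj
        simp only [Finset.mem_image, Finset.mem_Ico] at hj
        obtain ⟨x, hx, rfl⟩ := hj
        simp only [Finset.mem_Icc]
        omega

private lemma aux_S_pos (L : ℕ) (hL : 4 ≤ L) :
    1 ≤ ∑ j ∈ Finset.Icc (L / 2) L, L.choose j := by
  calc 1 = L.choose L := (Nat.choose_self L).symm
    _ ≤ _ := Finset.single_le_sum (f := fun j => L.choose j) (by intros; positivity)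
        (by simp [Finset.mem_Icc]; omega)

private lemma aux_S_lt (L : ℕ) (hL : 4 ≤ L) (hLe : Even L) :
    (∑ j ∈ Finset.Icc (L / 2) L, L.choose j) < 2 ^ L := by
  have h := aux_sum_split L hL
  have h1 : 1 ≤ ∑ j ∈ Finset.Ico 0 (L / 2), L.choose j := by
    calc 1 = L.choose 0 := (Nat.choose_zero_right L).symm
      _ ≤ _ := Finset.single_le_sum (f := fun j => L.choose j) (by intros; positivity)
          (by simp [Finset.mem_Ico]; omega)
  omega

private lemma aux_S_ge (L : ℕ) (hL : 4 ≤ L) (hLe : Even L) :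
    2 ^ L ≤ 2 * ∑ j ∈ Finset.Icc (L / 2) L, L.choose j := by
  have h := aux_sum_split L hL
  have h' := aux_low_le_high L hL hLe
  omega

private lemma binent_cont : Continuous binent := by
  have h1 : Continuous fun p : ℝ => p * Real.logb 2 p := by
    have : (fun p : ℝ => p * Real.logb 2 p) = fun p => (p * Real.log p) / Real.log 2 := by
      funext p; simp only [Real.logb]; ring
    rw [this]; exact Real.continuous_mul_log.div_const _
  have h2 : Continuous fun p : ℝ => (1 - p) * Real.logb 2 (1 - p) :=
    h1.comp (continuous_const.sub continuous_id)
  exact h1.neg.sub h2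

private lemma binent_half : binent (1/2) = 1 := by
  have h : Real.logb 2 (1/2 : ℝ) = -1 := by
    rw [one_div, Real.logb_inv, Real.logb_self_eq_one] <;> norm_num
  norm_num [binent, h]

private lemma fHat_cont (L : ℕ) : Continuous (fHat L) := by
  unfold fHat
  exact (((continuous_const.sub binent_cont).sub continuous_const).add
    (continuous_const.mul (binent_cont.comp
      ((continuous_const.mul continuous_id).div_const 4)))).add
    ((continuous_id.div_const 4).mul continuous_const)

private lemma fHat_zero_pos (L : ℕ) (hL : 4 ≤ L) (hLe : Even L) : 0 < fHat L 0 := by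
  have hSlt := aux_S_lt L hL hLe
  have hx0 : (0:ℝ) < L := by exact_mod_cast (by omega : 0 < L)
  have hb0 : binent 0 = 0 := by simp [binent]
  have hSpos : (0:ℝ) < ((∑ j ∈ Finset.Icc (L / 2) L, L.choose j : ℕ) : ℝ) := by
    exact_mod_cast aux_S_pos L hL
  have hlog : Real.logb 2 ((∑ j ∈ Finset.Icc (L / 2) L, L.choose j : ℕ) : ℝ) < L := by
    rw [Real.logb_lt_iff_lt_rpow one_lt_two hSpos, Real.rpow_natCast]
    exact_mod_cast hSlt
  have h1 : Real.logb 2 ((∑ j ∈ Finset.Icc (L / 2) L, L.choose j : ℕ) : ℝ) / L < 1 :=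
    (div_lt_one hx0).mpr hlog
  unfold fHat
  rw [show (L:ℝ) * 0 / 4 = 0 by ring, hb0]
  ring_nf
  ring_nf at h1
  linarith

set_option maxHeartbeats 1000000 in
private lemma fHat_two_neg (L : ℕ) (hL : 4 ≤ L) (hLe : Even L) :
    fHat L (2 / (L : ℝ)) < 0 := by
  have hSge := aux_S_ge L hL hLe
  set S : ℕ := ∑ j ∈ Finset.Icc (L / 2) L, L.choose j with hSdef
  set x : ℝ := (L : ℝ) with hxdef
  have hx : (4:ℝ) ≤ x := by rw [hxdef]; exact_mod_cast hL
  have hx0 : (0:ℝ) < x := by linarith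
  set c : ℝ := Real.log 2 with hcdef
  have hc : 0 < c := Real.log_pos one_lt_two
  have hc34 : c < 3/4 := lt_of_lt_of_le Real.log_two_lt_d9 (by norm_num)
  set lx : ℝ := Real.log x with hlxdef
  set A : ℝ := Real.log ((x - 2)/x) with hAdef
  set B : ℝ := Real.log (1 + 2/x) with hBdef
  set Q : ℝ := Real.log (x * (x + 2) / 4) with hQdef
  set LS : ℝ := Real.log ((S : ℕ) : ℝ) with hLSdef
  have hu : 1/x ≤ 1/4 := by
    rw [div_le_div_iff₀ hx0 (by norm_num : (0:ℝ) < 4)]; linarith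
  have e2 : 1 - 2/x = (x - 2)/x := by field_simp
  have hA' : A ≤ -(2/x) := by
    have h := Real.log_le_sub_one_of_pos
      (show (0:ℝ) < (x - 2)/x from div_pos (by linarith) hx0)
    rw [← hAdef] at h
    have e3 : (x - 2)/x - 1 = -(2/x) := by rw [← e2]; ring
    linarith
  have hxA : (x - 2) * A ≤ -2 + 4 * (1/x) := by
    have h := mul_le_mul_of_nonneg_left hA' (by linarith : (0:ℝ) ≤ x - 2)
    have e4 : (x - 2) * (-(2/x)) = -2 + 4 * (1/x) := by field_simp; ring
    linarith
  have hB' : B ≤ 2/x := by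
    have h := Real.log_le_sub_one_of_pos (show (0:ℝ) < 1 + 2/x by positivity)
    rw [← hBdef] at h; linarith
  have h4 : Real.log 4 = 2 * c := by
    rw [show (4:ℝ) = 2^2 by norm_num, Real.log_pow, ← hcdef]; push_cast; ring
  have hlx' : 2 * c ≤ lx := by
    have h := Real.log_le_log (by norm_num : (0:ℝ) < 4) hx
    rw [← hlxdef, h4] at h; exact h
  have hQ : Q = 2 * lx + B - 2 * c := by
    have e1 : x + 2 = x * (1 + 2/x) := by field_simp
    rw [hQdef, Real.log_div (by positivity) (by norm_num),
      Real.log_mul (by positivity) (by positivity), e1,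
      Real.log_mul (by positivity) (by positivity), h4, ← hlxdef, ← hBdef]
    ring
  have hLS : c * (x - 1) ≤ LS := by
    have hnat : 2 ^ (L - 1) ≤ S := by
      have hp : 2 ^ L = 2 * 2 ^ (L - 1) := by
        rw [← pow_succ']; congr 1; omega
      omega
    have hreal : (2:ℝ) ^ (L - 1) ≤ (S : ℝ) := by exact_mod_cast hnat
    have h := Real.log_le_log (by positivity) hreal
    rw [Real.log_pow, ← hLSdef, ← hcdef] at h
    have hcast : ((L - 1 : ℕ) : ℝ) = x - 1 := by
      rw [hxdef]; push_cast [Nat.cast_sub (by omega : 1 ≤ L)]; ring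
    rw [hcast] at h; linarith [h, mul_comm c (x - 1)]
  have hlog2x : Real.log (2/x) = c - lx := by
    rw [Real.log_div two_ne_zero (ne_of_gt hx0), ← hcdef, ← hlxdef]
  have hbin : binent (2/x) = ((2/x) * (lx - c) - ((x - 2)/x) * A) / c := by
    unfold binent
    rw [e2]
    simp only [Real.logb]
    rw [hlog2x, ← hAdef, ← hcdef]
    ring
  have hhalf : x * (2/x) / 4 = 1/2 := by field_simp; ring
  have hfe : x * c * fHat L (2/x) =
      x * c - (2 * (lx - c) - (x - 2) * A) - LS + c + Q / 2 := by
    unfold fHat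
    rw [← hxdef, ← hSdef, hhalf, binent_half, hbin]
    simp only [Real.logb]
    rw [← hQdef, ← hLSdef, ← hcdef]
    field_simp
    ring
  have hfinal : x * c * fHat L (2/x) < 0 := by
    rw [hfe, hQ]
    nlinarith [hxA, hB', hlx', hLS, hu, hc34, mul_pos hx0 hc]
  have hxc : 0 < x * c := mul_pos hx0 hc
  by_contra h
  push_neg at h
  nlinarith [mul_nonneg hxc.le h]

/-- For even `L ≥ 4`: `f̂_L(0) > 0`, `f̂_L(2/L) < 0`, and hence `f̂_L` has a root
`δ̂ ∈ (0, 2/L)` with `f̂_L > 0` on `[0, δ̂)`. -/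
theorem stmt_18 (L : ℕ) (hL : 4 ≤ L) (hLe : Even L) :
    0 < fHat L 0 ∧ fHat L (2 / (L : ℝ)) < 0 ∧
    ∃ δh : ℝ, δh ∈ Set.Ioo 0 (2 / (L : ℝ)) ∧ fHat L δh = 0 ∧
      ∀ δ : ℝ, 0 ≤ δ → δ < δh → 0 < fHat L δ := by
  have h0 := fHat_zero_pos L hL hLe
  have h2 := fHat_two_neg L hL hLe
  refine ⟨h0, h2, ?_⟩
  have hcont : Continuous (fHat L) := fHat_cont L
  have hLpos : (0:ℝ) < L := by exact_mod_cast (by omega : 0 < L)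
  have hb0 : (0:ℝ) < 2 / (L:ℝ) := by positivity
  set b : ℝ := 2 / (L:ℝ) with hbdef
  set T : Set ℝ := Set.Icc 0 b ∩ fHat L ⁻¹' Set.Iic 0 with hTdef
  have hTc : IsClosed T := isClosed_Icc.inter (isClosed_Iic.preimage hcont)
  have hTne : T.Nonempty := ⟨b, ⟨⟨hb0.le, le_refl b⟩, h2.le⟩⟩
  have hTbdd : BddBelow T := ⟨0, fun t ht => ht.1.1⟩
  set δh : ℝ := sInf T with hδdef
  have hmem : δh ∈ T := hTc.csInf_mem hTne hTbdd
  have hδ0 : 0 ≤ δh := hmem.1.1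
  have hδb : δh ≤ b := hmem.1.2
  have hfδ : fHat L δh ≤ 0 := hmem.2
  have hpos : ∀ t : ℝ, 0 ≤ t → t < δh → 0 < fHat L t := by
    intro t ht0 htδ
    by_contra hcontra
    push_neg at hcontra
    have htT : t ∈ T := ⟨⟨ht0, le_trans htδ.le hδb⟩, hcontra⟩
    exact absurd (csInf_le hTbdd htT) (not_le.mpr htδ)
  have hδpos : 0 < δh := by
    rcases lt_or_eq_of_le hδ0 with h | h
    · exact h
    · exfalso; rw [← h] at hfδ; linarith
  have hfδ0 : 0 ≤ fHat L δh := by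
    have hsub : Set.Ico (0:ℝ) δh ⊆ {t : ℝ | 0 ≤ fHat L t} :=
      fun t ht => (hpos t ht.1 ht.2).le
    have hclosed : IsClosed {t : ℝ | 0 ≤ fHat L t} := isClosed_le continuous_const hcont
    have hcl : δh ∈ closure (Set.Ico (0:ℝ) δh) := by
      rw [closure_Ico hδpos.ne]
      exact ⟨hδ0, le_refl _⟩
    exact (hclosed.closure_subset_iff.mpr hsub) hcl
  have hfeq : fHat L δh = 0 := le_antisymm hfδ hfδ0
  have hδltb : δh < b := by
    rcases lt_or_eq_of_le hδb with h | h
    · exact h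
    · exfalso; rw [h] at hfeq; linarith
  exact ⟨δh, ⟨hδpos, hδltb⟩, hfeq, hpos⟩
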